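/- Let E be a finite-dimensional real vector space and P : [0,1] → Hom(E*, E) a continuous map into the space of linear maps from E* to E. Define V_P = { (λ,φ) ∈ W(E) : λ(u) = λ(0) − ∫₀ᵘ P(s)(φ(s)) ds for all u ∈ [0,1] }. Then a pair (λ̃, φ̃) ∈ W(E) belongs to V_P^⊥ if and only if ∫₀¹ φ̃(s) ds = 0 and, for every u ∈ [0,1] and every α ∈ E*, α(λ̃(u)) + (∫ᵤ¹ φ̃(s) ds)(P(u)(α)) = 0. -/

import Mathlib

open MeasureTheory Set intervalIntegral

section Helpers

lemma primitive_hasDerivAt' {X : Type*} [NormedAddCommGroup X] [NormedSpace ℝ X] [CompleteSpace X]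
    {g : ℝ → X} (hg : Continuous g) (a u : ℝ) :
    HasDerivAt (fun v => ∫ s in a..v, g s) (g u) u :=
  integral_hasDerivAt_right (hg.intervalIntegrable _ _)
    (hg.stronglyMeasurableAtFilter _ _) hg.continuousAt

lemma coprimitive_hasDerivAt' {X : Type*} [NormedAddCommGroup X] [NormedSpace ℝ X] [CompleteSpace X]
    {g : ℝ → X} (hg : Continuous g) (b u : ℝ) :
    HasDerivAt (fun v => ∫ s in v..b, g s) (-(g u)) u := by
  have h : HasDerivAt (fun v => -∫ s in b..v, g s) (-(g u)) u := (primitive_hasDerivAt' hg b u).neg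
  have heq : (fun v => -∫ s in b..v, g s) = fun v => ∫ s in v..b, g s := by
    funext v; exact (integral_symm b v).symm
  rwa [heq] at h

lemma primitive_continuous' {X : Type*} [NormedAddCommGroup X] [NormedSpace ℝ X] [CompleteSpace X]
    {g : ℝ → X} (hg : Continuous g) (a : ℝ) :
    Continuous (fun v => ∫ s in a..v, g s) :=
  Differentiable.continuous (fun u => (primitive_hasDerivAt' hg a u).differentiableAt)

lemma coprimitive_continuous' {X : Type*} [NormedAddCommGroup X] [NormedSpace ℝ X] [CompleteSpace X]
    {g : ℝ → X} (hg : Continuous g) (b : ℝ) :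
    Continuous (fun v => ∫ s in v..b, g s) :=
  Differentiable.continuous (fun u => (coprimitive_hasDerivAt' hg b u).differentiableAt)

/-- The integration-by-parts / Fubini identity on the triangle. -/
lemma key_swap' {E : Type*} [NormedAddCommGroup E] [NormedSpace ℝ E] [CompleteSpace E]
    (f : ℝ → E →L[ℝ] ℝ) (g : ℝ → E) (hf : Continuous f) (hg : Continuous g) :
    ∫ u in (0:ℝ)..1, f u (∫ s in (0:ℝ)..u, g s) =
      ∫ u in (0:ℝ)..1, (∫ s in u..(1:ℝ), f s) (g u) := by
  set F : ℝ → E →L[ℝ] ℝ := fun u => ∫ s in u..(1:ℝ), f s with hF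
  set G : ℝ → E := fun u => ∫ s in (0:ℝ)..u, g s with hG
  have hFd : ∀ u : ℝ, HasDerivAt F (-(f u)) u := fun u => coprimitive_hasDerivAt' hf 1 u
  have hGd : ∀ u : ℝ, HasDerivAt G (g u) u := fun u => primitive_hasDerivAt' hg 0 u
  have hFc : Continuous F := coprimitive_continuous' hf 1
  have hGc : Continuous G := primitive_continuous' hg 0
  have hHd : ∀ u : ℝ, HasDerivAt (fun v => F v (G v)) ((-(f u)) (G u) + F u (g u)) u :=
    fun u => (hFd u).clm_apply (hGd u)
  have hc1 : Continuous fun u => (-(f u)) (G u) := (hf.neg).clm_apply hGc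
  have hc2 : Continuous fun u => F u (g u) := hFc.clm_apply hg
  have hint := integral_eq_sub_of_hasDerivAt (fun u (_ : u ∈ uIcc (0:ℝ) 1) => hHd u)
    ((hc1.add hc2).intervalIntegrable 0 1)
  have hF1 : F 1 = 0 := integral_same
  have hG0 : G 0 = 0 := integral_same
  rw [hF1, hG0, ContinuousLinearMap.zero_apply, map_zero, sub_zero] at hint
  rw [integral_add (hc1.intervalIntegrable 0 1) (hc2.intervalIntegrable 0 1)] at hint
  have hneg : ∫ u in (0:ℝ)..1, (-(f u)) (G u) = -∫ u in (0:ℝ)..1, f u (G u) := by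
    simp_rw [ContinuousLinearMap.neg_apply]
    exact intervalIntegral.integral_neg
  rw [hneg] at hint
  linarith

/-- A continuous function whose square has vanishing integral on `[0,1]` vanishes on `[0,1]`. -/
lemma sq_integral_zero' {c : ℝ → ℝ} (hc : Continuous c)
    (h : ∫ u in (0:ℝ)..1, (c u) ^ 2 = 0) : ∀ u ∈ Icc (0:ℝ) 1, c u = 0 := by
  intro u hu
  by_contra hne
  have hpos : 0 < ∫ x in (0:ℝ)..1, (c x) ^ 2 :=
    intervalIntegral.integral_pos zero_lt_one ((hc.pow 2).continuousOn)
      (fun x _ => sq_nonneg _) ⟨u, hu, by positivity⟩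
  linarith

end Helpers

section Ext

/-- Continuous extension to all of `ℝ` of a function continuous on `[0,1]`. -/
noncomputable def extI {X : Type*} (f : ℝ → X) : ℝ → X :=
  Set.IccExtend zero_le_one ((Set.Icc (0:ℝ) 1).restrict f)

lemma extI_continuous {X : Type*} [TopologicalSpace X] {f : ℝ → X}
    (hf : ContinuousOn f (Icc 0 1)) : Continuous (extI f) :=
  Continuous.Icc_extend' hf.restrict

lemma extI_eq {X : Type*} {f : ℝ → X} {x : ℝ} (hx : x ∈ Icc (0:ℝ) 1) : extI f x = f x :=
  IccExtend_of_mem _ _ hx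

end Ext



/-- An element of `W(E)`: a pair `(λ, φ)` of continuous maps on `[0,1]` with values in `E`
and in the dual `E* = E →L[ℝ] ℝ` respectively. -/
structure WPair (E : Type*) [NormedAddCommGroup E] [NormedSpace ℝ E] where
  lam : ℝ → E
  phi : ℝ → E →L[ℝ] ℝ
  lam_cont : ContinuousOn lam (Icc 0 1)
  phi_cont : ContinuousOn phi (Icc 0 1)

/-- The alternating bilinear form `Ω((λ,φ),(λ',φ')) = ∫₀¹ (φ(u)(λ'(u)) − φ'(u)(λ(u))) du`. -/
noncomputable def Omega {E : Type*} [NormedAddCommGroup E] [NormedSpace ℝ E]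
    (w w' : WPair E) : ℝ :=
  ∫ u in (0:ℝ)..(1:ℝ), (w.phi u (w'.lam u) - w'.phi u (w.lam u))

/-- The `Ω`-orthogonal of a subset of `W(E)`. -/
def orth {E : Type*} [NormedAddCommGroup E] [NormedSpace ℝ E] (A : Set (WPair E)) :
    Set (WPair E) :=
  {w | ∀ a ∈ A, Omega a w = 0}

theorem orth_solutions_characterization
    (E : Type*) [NormedAddCommGroup E] [NormedSpace ℝ E] [FiniteDimensional ℝ E]
    (P : ℝ → (E →L[ℝ] ℝ) →L[ℝ] E) (hP : ContinuousOn P (Icc 0 1))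
    (w : WPair E) :
    w ∈ orth {v : WPair E |
        ∀ u ∈ Icc (0:ℝ) 1, v.lam u = v.lam 0 - ∫ s in (0:ℝ)..u, P s (v.phi s)} ↔
      (∫ s in (0:ℝ)..(1:ℝ), w.phi s) = 0 ∧
        ∀ u ∈ Icc (0:ℝ) 1, ∀ α : E →L[ℝ] ℝ,
          α (w.lam u) + (∫ s in u..(1:ℝ), w.phi s) (P u α) = 0 := by
  have hIcc : uIcc (0:ℝ) 1 = Icc 0 1 := uIcc_of_le zero_le_one
  set lamE : ℝ → E := extI w.lam with hlamE_def
  set phiE : ℝ → E →L[ℝ] ℝ := extI w.phi with hphiE_def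
  set PE : ℝ → (E →L[ℝ] ℝ) →L[ℝ] E := extI P with hPE_def
  have hlamE : Continuous lamE := extI_continuous w.lam_cont
  have hphiE : Continuous phiE := extI_continuous w.phi_cont
  have hPEc : Continuous PE := extI_continuous hP
  have hlam_eq : ∀ {x : ℝ}, x ∈ Icc (0:ℝ) 1 → lamE x = w.lam x := fun hx => extI_eq hx
  have hphi_eq : ∀ {x : ℝ}, x ∈ Icc (0:ℝ) 1 → phiE x = w.phi x := fun hx => extI_eq hx
  have hPE_eq : ∀ {x : ℝ}, x ∈ Icc (0:ℝ) 1 → PE x = P x := fun hx => extI_eq hx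
  have hsub : ∀ {u : ℝ}, u ∈ Icc (0:ℝ) 1 → ∀ {s : ℝ}, s ∈ uIcc (0:ℝ) u → s ∈ Icc (0:ℝ) 1 := by
    intro u hu s hs
    rw [uIcc_of_le hu.1] at hs
    exact ⟨hs.1, le_trans hs.2 hu.2⟩
  -- `∫ s in u..1, phiE s = ∫ s in u..1, w.phi s` for `u ∈ [0,1]`
  have hphi_int : ∀ u ∈ Icc (0:ℝ) 1,
      (∫ s in u..(1:ℝ), phiE s) = ∫ s in u..(1:ℝ), w.phi s := by
    intro u hu
    apply intervalIntegral.integral_congr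
    intro s hs
    have : s ∈ Icc (0:ℝ) 1 := by
      rw [uIcc_of_le hu.2] at hs
      exact ⟨le_trans hu.1 hs.1, hs.2⟩
    exact hphi_eq this
  constructor
  · -- forward direction
    intro hw
    -- first condition
    have h1 : (∫ s in (0:ℝ)..(1:ℝ), w.phi s) = 0 := by
      apply ContinuousLinearMap.ext
      intro x
      have hv : (⟨fun _ => x, fun _ => 0, continuousOn_const, continuousOn_const⟩ : WPair E)
          ∈ {v : WPair E |
            ∀ u ∈ Icc (0:ℝ) 1, v.lam u = v.lam 0 - ∫ s in (0:ℝ)..u, P s (v.phi s)} := by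
        intro u hu
        simp
      have h0 := hw _ hv
      unfold Omega at h0
      simp only [ContinuousLinearMap.zero_apply, zero_sub] at h0
      rw [intervalIntegral.integral_neg, neg_eq_zero] at h0
      rw [ContinuousLinearMap.intervalIntegral_apply
        (w.phi_cont.intervalIntegrable_of_Icc zero_le_one) x]
      simpa using h0
    refine ⟨h1, ?_⟩
    -- second condition
    intro u₀ hu₀ α
    set c : ℝ → ℝ := fun u => α (lamE u) + (∫ s in u..(1:ℝ), phiE s) (PE u α) with hc_def
    have hΦc : Continuous fun u => (∫ s in u..(1:ℝ), phiE s) := coprimitive_continuous' hphiE 1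
    have hcc : Continuous c := by
      apply Continuous.add
      · exact (continuous_const : Continuous fun _ : ℝ => α).clm_apply hlamE
      · exact hΦc.clm_apply (hPEc.clm_apply continuous_const)
    set ψ : ℝ → E →L[ℝ] ℝ := fun u => c u • α with hψ_def
    have hψc : Continuous ψ := hcc.smul continuous_const
    set g : ℝ → E := fun s => PE s (ψ s) with hg_def
    have hgc : Continuous g := hPEc.clm_apply hψc
    set vlam : ℝ → E := fun u => -∫ s in (0:ℝ)..u, g s with hvlam_def
    have hvlamc : Continuous vlam := (primitive_continuous' hgc 0).neg
    have hv : (⟨vlam, ψ, hvlamc.continuousOn, hψc.continuousOn⟩ : WPair E)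
        ∈ {v : WPair E |
          ∀ u ∈ Icc (0:ℝ) 1, v.lam u = v.lam 0 - ∫ s in (0:ℝ)..u, P s (v.phi s)} := by
      intro u hu
      have hgP : (∫ s in (0:ℝ)..u, g s) = ∫ s in (0:ℝ)..u, P s (ψ s) := by
        apply intervalIntegral.integral_congr
        intro s hs
        show PE s (ψ s) = P s (ψ s)
        rw [hPE_eq (hsub hu hs)]
      show (-∫ s in (0:ℝ)..u, g s) = vlam 0 - ∫ s in (0:ℝ)..u, P s (ψ s)
      have h0 : vlam 0 = 0 := by
        show (-∫ s in (0:ℝ)..(0:ℝ), g s) = 0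
        rw [intervalIntegral.integral_same, neg_zero]
      rw [h0, hgP, zero_sub]
    have h0 : (∫ u in (0:ℝ)..1, (ψ u (w.lam u) - w.phi u (vlam u))) = 0 := hw _ hv
    -- rewrite integrand
    have hcongr : (∫ u in (0:ℝ)..1, (ψ u (w.lam u) - w.phi u (vlam u))) =
        ∫ u in (0:ℝ)..1, (ψ u (lamE u) + phiE u (∫ s in (0:ℝ)..u, g s)) := by
      apply intervalIntegral.integral_congr
      intro u hu
      rw [hIcc] at hu
      show ψ u (w.lam u) - w.phi u (vlam u) = ψ u (lamE u) + phiE u (∫ s in (0:ℝ)..u, g s)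
      rw [hlam_eq hu, hphi_eq hu]
      show ψ u (w.lam u) - w.phi u (-∫ s in (0:ℝ)..u, g s)
          = ψ u (w.lam u) + w.phi u (∫ s in (0:ℝ)..u, g s)
      rw [ContinuousLinearMap.map_neg, sub_neg_eq_add]
    rw [hcongr] at h0
    have hsplit : (∫ u in (0:ℝ)..1, (ψ u (lamE u) + phiE u (∫ s in (0:ℝ)..u, g s))) =
        (∫ u in (0:ℝ)..1, ψ u (lamE u))
          + ∫ u in (0:ℝ)..1, phiE u (∫ s in (0:ℝ)..u, g s) := by
      apply intervalIntegral.integral_add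
      · exact (hψc.clm_apply hlamE).intervalIntegrable 0 1
      · exact (hphiE.clm_apply (primitive_continuous' hgc 0)).intervalIntegrable 0 1
    rw [hsplit, key_swap' phiE g hphiE hgc] at h0
    have hmerge : (∫ u in (0:ℝ)..1, ψ u (lamE u))
          + (∫ u in (0:ℝ)..1, (∫ s in u..(1:ℝ), phiE s) (g u))
        = ∫ u in (0:ℝ)..1, (c u) ^ 2 := by
      rw [← intervalIntegral.integral_add
        ((hψc.clm_apply hlamE).intervalIntegrable 0 1)
        (((coprimitive_continuous' hphiE 1).clm_apply hgc).intervalIntegrable 0 1)]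
      apply intervalIntegral.integral_congr
      intro u _
      have e1 : ψ u (lamE u) = c u * α (lamE u) := by
        show (c u • α) (lamE u) = c u * α (lamE u)
        rw [ContinuousLinearMap.smul_apply, smul_eq_mul]
      have e2 : (∫ s in u..(1:ℝ), phiE s) (g u)
          = c u * (∫ s in u..(1:ℝ), phiE s) (PE u α) := by
        have hg' : g u = c u • PE u α := by
          show PE u (c u • α) = c u • PE u α
          exact (PE u).map_smul (c u) α
        rw [hg', ContinuousLinearMap.map_smul, smul_eq_mul]
      show ψ u (lamE u) + (∫ s in u..(1:ℝ), phiE s) (g u) = (c u) ^ 2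
      rw [e1, e2]
      have hcu : c u = α (lamE u) + (∫ s in u..(1:ℝ), phiE s) (PE u α) := rfl
      rw [hcu]
      ring
    rw [hmerge] at h0
    have hczero := sq_integral_zero' hcc h0 u₀ hu₀
    have : α (lamE u₀) + (∫ s in u₀..(1:ℝ), phiE s) (PE u₀ α) = 0 := hczero
    rwa [hlam_eq hu₀, hPE_eq hu₀, hphi_int u₀ hu₀] at this
  · -- backward direction
    rintro ⟨h1, h2⟩ v hv
    set vphiE : ℝ → E →L[ℝ] ℝ := extI v.phi with hvphiE_def
    have hvphiEc : Continuous vphiE := extI_continuous v.phi_cont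
    have hvphi_eq : ∀ {x : ℝ}, x ∈ Icc (0:ℝ) 1 → vphiE x = v.phi x := fun hx => extI_eq hx
    set g : ℝ → E := fun s => PE s (vphiE s) with hg_def
    have hgc : Continuous g := hPEc.clm_apply hvphiEc
    unfold Omega
    have hcongr : (∫ u in (0:ℝ)..1, (v.phi u (w.lam u) - w.phi u (v.lam u))) =
        ∫ u in (0:ℝ)..1,
          (-((∫ s in u..(1:ℝ), phiE s) (g u)) - phiE u (v.lam 0)
            + phiE u (∫ s in (0:ℝ)..u, g s)) := by
      apply intervalIntegral.integral_congr
      intro u hu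
      rw [hIcc] at hu
      have hA : v.phi u (w.lam u) = -((∫ s in u..(1:ℝ), phiE s) (g u)) := by
        have h2' := h2 u hu (v.phi u)
        have hg' : g u = P u (v.phi u) := by
          show PE u (vphiE u) = P u (v.phi u)
          rw [hPE_eq hu, hvphi_eq hu]
        rw [hg', hphi_int u hu]
        linarith
      have hB : w.phi u (v.lam u) = phiE u (v.lam 0) - phiE u (∫ s in (0:ℝ)..u, g s) := by
        rw [← hphi_eq hu] at *
        rw [hv u hu, map_sub]
        congr 2
        apply intervalIntegral.integral_congr
        intro s hs
        show P s (v.phi s) = PE s (vphiE s)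
        rw [hPE_eq (hsub hu hs), hvphi_eq (hsub hu hs)]
      show v.phi u (w.lam u) - w.phi u (v.lam u)
          = -((∫ s in u..(1:ℝ), phiE s) (g u)) - phiE u (v.lam 0)
            + phiE u (∫ s in (0:ℝ)..u, g s)
      rw [hA, hB]
      ring
    rw [hcongr]
    have hi1 : IntervalIntegrable (fun u => -((∫ s in u..(1:ℝ), phiE s) (g u))) volume 0 1 :=
      (((coprimitive_continuous' hphiE 1).clm_apply hgc).neg).intervalIntegrable 0 1
    have hi2 : IntervalIntegrable (fun u => phiE u (v.lam 0)) volume 0 1 :=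
      (hphiE.clm_apply continuous_const).intervalIntegrable 0 1
    have hi3 : IntervalIntegrable (fun u => phiE u (∫ s in (0:ℝ)..u, g s)) volume 0 1 :=
      (hphiE.clm_apply (primitive_continuous' hgc 0)).intervalIntegrable 0 1
    rw [intervalIntegral.integral_add (hi1.sub hi2) hi3,
      intervalIntegral.integral_sub hi1 hi2, intervalIntegral.integral_neg,
      ← key_swap' phiE g hphiE hgc]
    have hmid : (∫ u in (0:ℝ)..1, phiE u (v.lam 0)) = 0 := by
      rw [← ContinuousLinearMap.intervalIntegral_apply (hphiE.intervalIntegrable 0 1) (v.lam 0)]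
      have heq : (∫ s in (0:ℝ)..(1:ℝ), phiE s) = ∫ s in (0:ℝ)..(1:ℝ), w.phi s :=
        hphi_int 0 (by norm_num)
      rw [heq, h1, ContinuousLinearMap.zero_apply]
    rw [hmid]
    ring
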